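/- Let p be a prime, n ≥ 0 an integer, and t, u ∈ ℤ_p. For (a, b) ∈ ℚ_p × ℚ_p with a² + abt + b²u ≠ 0 define the matrix M(a,b) = [[a + bt, b·p^{−n}], [−b·p^{n}·u, a]] ∈ GL₂(ℚ_p), and set m(a,b) = v_p(a² + abt + b²u) − 2·min{v_p(a), v_p(b) − n} (with v_p(0) = +∞). Then for two such pairs (a,b) and (a',b'), the matrices M(a,b) and M(a',b') lie in the same double coset ℚ_p^× · GL₂(ℤ_p) · g · GL₂(ℤ_p) if and only if m(a,b) = m(a',b'). -/

import Mathlib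

namespace TorusDoubleCoset

/-- The `p`-adic valuation on `ℚ_p` with values in `WithTop ℤ`, sending `0` to `⊤`. -/
noncomputable def vT (p : ℕ) [Fact p.Prime] (x : ℚ_[p]) : WithTop ℤ :=
  open scoped Classical in
  if x = 0 then ⊤ else (x.valuation : WithTop ℤ)

/-- A matrix over `ℚ_p` lies in `GL₂(ℤ_p)`: all entries are `p`-adic integers and the
determinant is a `p`-adic unit. -/
def IsGLZp (p : ℕ) [Fact p.Prime] (k : Matrix (Fin 2) (Fin 2) ℚ_[p]) : Prop :=
  (∀ i j, ‖k i j‖ ≤ 1) ∧ ‖k.det‖ = 1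

/-- The image `M(a,b) = [[a + bt, b p^{−n}], [−b p^{n} u, a]]` of the element `a + bτ` of the
quadratic algebra `E = ℚ_p[τ]`, `τ² = tτ − u`, under the embedding `E → M(2, ℚ_p)` for which
`M(2, ℤ_p) ∩ E = ℤ_p + p^n (ℤ_p + ℤ_p τ)`. -/
noncomputable def Mmat (p : ℕ) [Fact p.Prime] (n : ℕ) (t u : ℤ_[p]) (a b : ℚ_[p]) :
    Matrix (Fin 2) (Fin 2) ℚ_[p] :=
  !![a + b * (t : ℚ_[p]), b * (p : ℚ_[p]) ^ (-(n : ℤ));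
     -(b * (p : ℚ_[p]) ^ (n : ℕ) * (u : ℚ_[p])), a]

section Aux

variable {p : ℕ} [Fact p.Prime]


lemma one_lt_pR : (1 : ℝ) < p := by exact_mod_cast (Fact.out : p.Prime).one_lt
lemma p_posR : (0 : ℝ) < p := lt_trans one_pos one_lt_pR

lemma vT_zero : vT p 0 = ⊤ := by simp [vT]

lemma vT_of_ne {x : ℚ_[p]} (hx : x ≠ 0) : vT p x = (x.valuation : WithTop ℤ) := by
  simp [vT, hx]

lemma vT_eq_top_iff {x : ℚ_[p]} : vT p x = ⊤ ↔ x = 0 := by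
  by_cases hx : x = 0 <;> simp [vT, hx]

lemma norm_le_iff_vT_le {x y : ℚ_[p]} : ‖x‖ ≤ ‖y‖ ↔ vT p y ≤ vT p x := by
  by_cases hy : y = 0
  · subst hy
    simp only [norm_zero, vT_zero, top_le_iff, vT_eq_top_iff]
    constructor
    · intro h; exact norm_le_zero_iff.mp h
    · intro h; simp [h]
  · by_cases hx : x = 0
    · subst hx
      simp [vT_zero, norm_nonneg, le_top, hy]
    · rw [vT_of_ne hx, vT_of_ne hy, Padic.norm_eq_zpow_neg_valuation hx, Padic.norm_eq_zpow_neg_valuation hy,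
        zpow_le_zpow_iff_right₀ one_lt_pR, neg_le_neg_iff, WithTop.coe_le_coe]

lemma norm_eq_iff_vT_eq {x y : ℚ_[p]} : ‖x‖ = ‖y‖ ↔ vT p x = vT p y := by
  constructor
  · intro h
    exact le_antisymm (norm_le_iff_vT_le.mp h.ge) (norm_le_iff_vT_le.mp h.le)
  · intro h
    exact le_antisymm (norm_le_iff_vT_le.mpr h.ge) (norm_le_iff_vT_le.mpr h.le)

lemma vT_mul (x y : ℚ_[p]) : vT p (x * y) = vT p x + vT p y := by
  by_cases hx : x = 0
  · simp [hx, vT_zero]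
  by_cases hy : y = 0
  · simp [hy, vT_zero]
  rw [vT_of_ne hx, vT_of_ne hy, vT_of_ne (mul_ne_zero hx hy),
    Padic.valuation_mul hx hy]
  push_cast
  rfl

lemma p_pow_ne_zero (n : ℕ) : ((p : ℚ_[p]) ^ n) ≠ 0 :=
  pow_ne_zero _ (by exact_mod_cast (Fact.out : p.Prime).ne_zero)

lemma vT_p_pow (n : ℕ) : vT p ((p : ℚ_[p]) ^ n) = ((n : ℤ) : WithTop ℤ) := by
  rw [vT_of_ne (p_pow_ne_zero n)]
  congr 1
  have h1 : ‖(p : ℚ_[p]) ^ n‖ = (p : ℝ) ^ (-(n:ℤ)) := Padic.norm_p_pow n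
  rw [Padic.norm_eq_zpow_neg_valuation (p_pow_ne_zero n)] at h1
  have := (zpow_right_strictMono₀ (one_lt_pR (p := p))).injective h1
  omega

lemma vT_mul_p_pow (x : ℚ_[p]) (n : ℕ) :
    vT p (x * (p : ℚ_[p]) ^ n) = vT p x + ((n : ℤ) : WithTop ℤ) := by
  rw [vT_mul, vT_p_pow]


/-! ### The sup norm of a 2×2 matrix -/

noncomputable def S (g : Matrix (Fin 2) (Fin 2) ℚ_[p]) : ℝ :=
  max (max ‖g 0 0‖ ‖g 0 1‖) (max ‖g 1 0‖ ‖g 1 1‖)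

lemma S_le_iff {g : Matrix (Fin 2) (Fin 2) ℚ_[p]} {r : ℝ} :
    S g ≤ r ↔ ∀ i j, ‖g i j‖ ≤ r := by
  constructor
  · intro h i j
    fin_cases i <;> fin_cases j <;>
      simp only [S, max_le_iff] at h <;> tauto
  · intro h
    simp only [S, max_le_iff]
    exact ⟨⟨h 0 0, h 0 1⟩, h 1 0, h 1 1⟩

lemma entry_le_S (g : Matrix (Fin 2) (Fin 2) ℚ_[p]) (i j : Fin 2) : ‖g i j‖ ≤ S g :=
  S_le_iff.mp le_rfl i j

lemma S_nonneg (g : Matrix (Fin 2) (Fin 2) ℚ_[p]) : 0 ≤ S g :=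
  le_trans (norm_nonneg _) (entry_le_S g 0 0)

lemma S_mul_le (g h : Matrix (Fin 2) (Fin 2) ℚ_[p]) : S (g * h) ≤ S g * S h := by
  rw [S_le_iff]
  intro i j
  rw [Matrix.mul_apply, Fin.sum_univ_two]
  refine le_trans (Padic.nonarchimedean _ _) (max_le ?_ ?_) <;>
    · rw [norm_mul]
      exact mul_le_mul (entry_le_S g i _) (entry_le_S h _ j) (norm_nonneg _) (S_nonneg g)

lemma S_smul (c : ℚ_[p]) (g : Matrix (Fin 2) (Fin 2) ℚ_[p]) : S (c • g) = ‖c‖ * S g := by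
  simp only [S, Matrix.smul_apply, smul_eq_mul, norm_mul]
  rw [← mul_max_of_nonneg _ _ (norm_nonneg c), ← mul_max_of_nonneg _ _ (norm_nonneg c),
    ← mul_max_of_nonneg _ _ (norm_nonneg c)]

lemma norm_det_le (g : Matrix (Fin 2) (Fin 2) ℚ_[p]) : ‖g.det‖ ≤ S g ^ 2 := by
  rw [Matrix.det_fin_two, sub_eq_add_neg]
  refine le_trans (Padic.nonarchimedean _ _) (max_le ?_ ?_) <;>
    rw [sq] <;> [skip; rw [norm_neg]] <;>
    · rw [norm_mul]
      exact mul_le_mul (entry_le_S g _ _) (entry_le_S g _ _) (norm_nonneg _) (S_nonneg g)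

lemma S_pos {g : Matrix (Fin 2) (Fin 2) ℚ_[p]} (h : g.det ≠ 0) : 0 < S g := by
  rcases lt_or_eq_of_le (S_nonneg g) with h' | h'
  · exact h'
  · exfalso
    apply h
    have hz : ∀ i j, g i j = 0 := by
      intro i j
      have := entry_le_S g i j
      rw [← h'] at this
      exact norm_le_zero_iff.mp this
    rw [Matrix.det_fin_two, hz, hz, hz, hz]
    ring


/-! ### GL₂(ℤ_p) lemmas -/

lemma IsGLZp.S_le_one {k : Matrix (Fin 2) (Fin 2) ℚ_[p]} (hk : IsGLZp p k) : S k ≤ 1 :=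
  S_le_iff.mpr hk.1

lemma IsGLZp.det_ne_zero {k : Matrix (Fin 2) (Fin 2) ℚ_[p]} (hk : IsGLZp p k) : k.det ≠ 0 := by
  intro h
  have h2 := hk.2
  rw [h, norm_zero] at h2
  exact one_ne_zero h2.symm

lemma IsGLZp.mul {k k' : Matrix (Fin 2) (Fin 2) ℚ_[p]} (hk : IsGLZp p k) (hk' : IsGLZp p k') :
    IsGLZp p (k * k') := by
  constructor
  · intro i j
    refine le_trans (entry_le_S _ i j) (le_trans (S_mul_le k k') ?_)
    calc S k * S k' ≤ 1 * 1 := by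
          exact mul_le_mul hk.S_le_one hk'.S_le_one (S_nonneg k') zero_le_one
      _ = 1 := by ring
  · rw [Matrix.det_mul, norm_mul, hk.2, hk'.2, one_mul]

lemma IsGLZp.exists_inv {k : Matrix (Fin 2) (Fin 2) ℚ_[p]} (hk : IsGLZp p k) :
    ∃ k' : Matrix (Fin 2) (Fin 2) ℚ_[p], IsGLZp p k' ∧ k * k' = 1 ∧ k' * k = 1 := by
  have hdet : IsUnit k.det := isUnit_iff_ne_zero.mpr hk.det_ne_zero
  refine ⟨k⁻¹, ⟨?_, ?_⟩, Matrix.mul_nonsing_inv k hdet, Matrix.nonsing_inv_mul k hdet⟩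
  · intro i j
    rw [Matrix.inv_def, Ring.inverse_eq_inv', Matrix.smul_apply, smul_eq_mul, norm_mul,
      norm_inv, hk.2, inv_one, one_mul, Matrix.adjugate_fin_two]
    fin_cases i <;> fin_cases j <;> simp <;> exact hk.1 _ _
  · rw [Matrix.det_nonsing_inv, Ring.inverse_eq_inv', norm_inv, hk.2, inv_one]

lemma IsGLZp.one : IsGLZp p (1 : Matrix (Fin 2) (Fin 2) ℚ_[p]) := by
  constructor
  · intro i j
    rw [Matrix.one_apply]
    split <;> simp
  · simp

lemma S_mul_left {k g : Matrix (Fin 2) (Fin 2) ℚ_[p]} (hk : IsGLZp p k) : S (k * g) = S g := by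
  obtain ⟨k', hk', hkk', hk'k⟩ := hk.exists_inv
  refine le_antisymm (le_trans (S_mul_le k g) ?_) ?_
  · calc S k * S g ≤ 1 * S g :=
        mul_le_mul_of_nonneg_right hk.S_le_one (S_nonneg g)
      _ = S g := one_mul _
  · have : g = k' * (k * g) := by rw [← Matrix.mul_assoc, hk'k, Matrix.one_mul]
    calc S g = S (k' * (k * g)) := by rw [← this]
      _ ≤ S k' * S (k * g) := S_mul_le _ _
      _ ≤ 1 * S (k * g) := mul_le_mul_of_nonneg_right hk'.S_le_one (S_nonneg _)
      _ = S (k * g) := one_mul _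

lemma S_mul_right {k g : Matrix (Fin 2) (Fin 2) ℚ_[p]} (hk : IsGLZp p k) : S (g * k) = S g := by
  obtain ⟨k', hk', hkk', hk'k⟩ := hk.exists_inv
  refine le_antisymm (le_trans (S_mul_le g k) ?_) ?_
  · calc S g * S k ≤ S g * 1 :=
        mul_le_mul_of_nonneg_left hk.S_le_one (S_nonneg g)
      _ = S g := mul_one _
  · have : g = (g * k) * k' := by rw [Matrix.mul_assoc, hkk', Matrix.mul_one]
    calc S g = S ((g * k) * k') := by rw [← this]
      _ ≤ S (g * k) * S k' := S_mul_le _ _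
      _ ≤ S (g * k) * 1 := mul_le_mul_of_nonneg_left hk'.S_le_one (S_nonneg _)
      _ = S (g * k) := mul_one _

lemma det_coset {g : Matrix (Fin 2) (Fin 2) ℚ_[p]} {c : ℚ_[p]}
    {k₁ k₂ : Matrix (Fin 2) (Fin 2) ℚ_[p]}
    (h1 : IsGLZp p k₁) (h2 : IsGLZp p k₂) :
    ‖(c • (k₁ * g * k₂)).det‖ = ‖c‖ ^ 2 * ‖g.det‖ := by
  rw [Matrix.det_smul, Matrix.det_mul, Matrix.det_mul]
  rw [norm_mul, norm_mul, norm_mul, norm_pow, h1.2, h2.2]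
  simp [Fintype.card_fin]

lemma S_coset {g : Matrix (Fin 2) (Fin 2) ℚ_[p]} {c : ℚ_[p]}
    {k₁ k₂ : Matrix (Fin 2) (Fin 2) ℚ_[p]} (h1 : IsGLZp p k₁) (h2 : IsGLZp p k₂) :
    S (c • (k₁ * g * k₂)) = ‖c‖ * S g := by
  rw [S_smul, S_mul_right h2, S_mul_left h1]


/-! ### Reduction to diagonal form -/

noncomputable def D (p : ℕ) [Fact p.Prime] (m : ℕ) : Matrix (Fin 2) (Fin 2) ℚ_[p] :=
  !![1, 0; 0, (p : ℚ_[p]) ^ m]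

lemma det_D (m : ℕ) : (D p m).det = (p : ℚ_[p]) ^ m := by
  rw [D, Matrix.det_fin_two_of]; ring

lemma norm_det_D (m : ℕ) : ‖(D p m).det‖ = (p : ℝ) ^ (-(m : ℤ)) := by
  rw [det_D]; exact Padic.norm_p_pow m

lemma S_D (m : ℕ) : S (D p m) = 1 := by
  have h1 : ‖((p : ℚ_[p]) ^ m)‖ ≤ 1 := by
    rw [Padic.norm_p_pow]
    exact zpow_le_one_of_nonpos₀ (le_of_lt one_lt_pR) (by omega)
  have e00 : (D p m) 0 0 = 1 := by simp [D]
  have e01 : (D p m) 0 1 = 0 := by simp [D]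
  have e10 : (D p m) 1 0 = 0 := by simp [D]
  have e11 : (D p m) 1 1 = (p : ℚ_[p]) ^ m := by simp [D]
  rw [S, e00, e01, e10, e11, norm_one, norm_zero, max_eq_left zero_le_one,
    max_eq_right (norm_nonneg _)]
  exact max_eq_left h1

def Red (g : Matrix (Fin 2) (Fin 2) ℚ_[p]) : Prop :=
  ∃ (m : ℕ) (c : ℚ_[p]) (k₁ k₂ : Matrix (Fin 2) (Fin 2) ℚ_[p]),
    c ≠ 0 ∧ IsGLZp p k₁ ∧ IsGLZp p k₂ ∧ g = c • (k₁ * D p m * k₂)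

lemma smul_mul_helper (c : ℚ_[p]) (A X B : Matrix (Fin 2) (Fin 2) ℚ_[p]) :
    A * (c • X) * B = c • (A * X * B) := by
  rw [Matrix.mul_smul, Matrix.smul_mul]

lemma Red.smul {g : Matrix (Fin 2) (Fin 2) ℚ_[p]} {c : ℚ_[p]} (hc : c ≠ 0) (h : Red g) :
    Red (c • g) := by
  obtain ⟨m, c₀, k₁, k₂, hc₀, h1, h2, hg⟩ := h
  exact ⟨m, c * c₀, k₁, k₂, mul_ne_zero hc hc₀, h1, h2, by rw [hg, smul_smul]⟩

lemma Red.glmul {g A B : Matrix (Fin 2) (Fin 2) ℚ_[p]} (hA : IsGLZp p A) (hB : IsGLZp p B)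
    (h : Red g) : Red (A * g * B) := by
  obtain ⟨m, c₀, k₁, k₂, hc₀, h1, h2, hg⟩ := h
  refine ⟨m, c₀, A * k₁, k₂ * B, hc₀, hA.mul h1, h2.mul hB, ?_⟩
  rw [hg, smul_mul_helper]
  congr 1
  simp only [Matrix.mul_assoc]

lemma red_unit {h : Matrix (Fin 2) (Fin 2) ℚ_[p]} (hS : ∀ i j, ‖h i j‖ ≤ 1)
    (h00 : ‖h 0 0‖ = 1) (hdet : h.det ≠ 0) : Red h := by
  set α := h 0 0 with hα_def
  have hα : α ≠ 0 := by
    intro hz; rw [hz, norm_zero] at h00; exact zero_ne_one h00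
  have hnormα : ‖α‖ = 1 := h00
  set e := h.det / α ^ 2 with he_def
  have he : e ≠ 0 := div_ne_zero hdet (pow_ne_zero _ hα)
  have hnorme : ‖e‖ ≤ 1 := by
    rw [he_def, norm_div, norm_pow, hnormα, one_pow, div_one]
    calc ‖h.det‖ ≤ S h ^ 2 := norm_det_le h
      _ ≤ 1 ^ 2 := by
          have := S_le_iff.mpr hS
          exact pow_le_pow_left₀ (S_nonneg h) this 2
      _ = 1 := one_pow 2
  have hval : 0 ≤ e.valuation := (Padic.norm_le_one_iff_val_nonneg e).mp hnorme
  set m := e.valuation.toNat with hm_def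
  have hpm : ((p : ℚ_[p]) ^ m) ≠ 0 := p_pow_ne_zero m
  set υ := e / (p : ℚ_[p]) ^ m with hυ_def
  have hυ : υ ≠ 0 := div_ne_zero he hpm
  have hnormυ : ‖υ‖ = 1 := by
    rw [hυ_def, norm_div, Padic.norm_p_pow, Padic.norm_eq_zpow_neg_valuation he,
      ← zpow_sub₀ (ne_of_gt p_posR)]
    have : -e.valuation - -(m : ℤ) = 0 := by omega
    rw [this, zpow_zero]
  refine ⟨m, α, !![1, 0; h 1 0 / α, 1], !![1, 0; 0, υ] * !![1, h 0 1 / α; 0, 1], hα, ?_, ?_, ?_⟩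
  · constructor
    · intro i j
      fin_cases i <;> fin_cases j <;> simp
      rw [hnormα, div_one]
      exact hS 1 0
    · rw [Matrix.det_fin_two_of]; norm_num
  · refine IsGLZp.mul ⟨?_, ?_⟩ ⟨?_, ?_⟩
    · intro i j
      fin_cases i <;> fin_cases j <;> simp [le_of_eq hnormυ]
    · rw [Matrix.det_fin_two_of]; norm_num [hnormυ]
    · intro i j
      fin_cases i <;> fin_cases j <;> simp
      rw [hnormα, div_one]
      exact hS 0 1
    · rw [Matrix.det_fin_two_of]; norm_num
  · have hdet2 : h.det = h 0 0 * h 1 1 - h 0 1 * h 1 0 := Matrix.det_fin_two h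
    ext i j
    fin_cases i <;> fin_cases j <;>
        simp only [D, Matrix.smul_apply, Matrix.mul_apply, Fin.sum_univ_two, smul_eq_mul] <;>
        simp <;>
        first
          | (rw [hυ_def, he_def, hdet2]; field_simp; ring)
          | rfl
          | (rw [mul_div_assoc', eq_div_iff hα, mul_comm])
  

/-! ### Swaps and the full reduction -/

noncomputable def sw (p : ℕ) [Fact p.Prime] : Matrix (Fin 2) (Fin 2) ℚ_[p] := !![0, 1; 1, 0]

lemma isGLZp_swap : IsGLZp p (sw p) := by
  rw [sw]
  constructor
  · intro i j
    fin_cases i <;> fin_cases j <;> simp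
  · rw [Matrix.det_fin_two_of]; norm_num

lemma swap_mul (h : Matrix (Fin 2) (Fin 2) ℚ_[p]) :
    sw p * h = !![h 1 0, h 1 1; h 0 0, h 0 1] := by
  ext i j
  rw [sw]
  fin_cases i <;> fin_cases j <;> simp [Matrix.mul_apply, Fin.sum_univ_two]

lemma mul_swap (h : Matrix (Fin 2) (Fin 2) ℚ_[p]) :
    h * sw p = !![h 0 1, h 0 0; h 1 1, h 1 0] := by
  ext i j
  rw [sw]
  fin_cases i <;> fin_cases j <;> simp [Matrix.mul_apply, Fin.sum_univ_two]

lemma swap_swap : (sw p) * sw p = 1 := by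
  ext i j
  rw [sw]
  fin_cases i <;> fin_cases j <;> simp [Matrix.mul_apply, Fin.sum_univ_two, Matrix.one_apply]

lemma det_swap_ne : (sw p).det ≠ 0 := by
  rw [sw, Matrix.det_fin_two_of]; norm_num

lemma red_pos {h : Matrix (Fin 2) (Fin 2) ℚ_[p]} (hS : ∀ i j, ‖h i j‖ ≤ 1)
    (hdet : h.det ≠ 0) (i j : Fin 2) (hij : ‖h i j‖ = 1) : Red h := by
  have hσ : IsGLZp p (sw p) := isGLZp_swap
  have hσσ := swap_swap (p := p)
  have hSh : S h ≤ 1 := S_le_iff.mpr hS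
  have boundL : ∀ i' j', ‖(sw p * h) i' j'‖ ≤ 1 := fun i' j' =>
    le_trans (entry_le_S _ i' j') (by rw [S_mul_left hσ]; exact hSh)
  have boundR : ∀ i' j', ‖(h * sw p) i' j'‖ ≤ 1 := fun i' j' =>
    le_trans (entry_le_S _ i' j') (by rw [S_mul_right hσ]; exact hSh)
  have boundLR : ∀ i' j', ‖(sw p * h * sw p) i' j'‖ ≤ 1 := fun i' j' =>
    le_trans (entry_le_S _ i' j') (by rw [S_mul_right hσ, S_mul_left hσ]; exact hSh)
  fin_cases i <;> fin_cases j
  · exact red_unit hS hij hdet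
  · -- pivot at (0,1): use h * σ
    have h2 : Red (h * sw p) := by
      refine red_unit boundR ?_ ?_
      · rw [mul_swap]; simpa using hij
      · rw [Matrix.det_mul]; exact mul_ne_zero hdet det_swap_ne
    have h3 := Red.glmul IsGLZp.one hσ h2
    rwa [Matrix.one_mul, Matrix.mul_assoc, hσσ, Matrix.mul_one] at h3
  · -- pivot at (1,0): use σ * h
    have h2 : Red (sw p * h) := by
      refine red_unit boundL ?_ ?_
      · rw [swap_mul]; simpa using hij
      · rw [Matrix.det_mul]; exact mul_ne_zero det_swap_ne hdet
    have h3 := Red.glmul hσ IsGLZp.one h2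
    rwa [Matrix.mul_one, ← Matrix.mul_assoc, hσσ, Matrix.one_mul] at h3
  · -- pivot at (1,1): use σ * h * σ
    have h2 : Red (sw p * h * sw p) := by
      refine red_unit boundLR ?_ ?_
      · rw [Matrix.mul_assoc, mul_swap, swap_mul]; simpa using hij
      · rw [Matrix.det_mul, Matrix.det_mul]
        exact mul_ne_zero (mul_ne_zero det_swap_ne hdet) det_swap_ne
    have h3 := Red.glmul hσ hσ h2
    have e : sw p * (sw p * h * sw p) * sw p = h := by
      simp only [← Matrix.mul_assoc]
      rw [hσσ, Matrix.one_mul, Matrix.mul_assoc, hσσ, Matrix.mul_one]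
    rwa [e] at h3

lemma exists_norm_eq_S (g : Matrix (Fin 2) (Fin 2) ℚ_[p]) : ∃ i j, ‖g i j‖ = S g := by
  rcases max_choice (max ‖g 0 0‖ ‖g 0 1‖) (max ‖g 1 0‖ ‖g 1 1‖) with h | h
  · rcases max_choice ‖g 0 0‖ ‖g 0 1‖ with h' | h'
    · exact ⟨0, 0, by rw [S, h, h']⟩
    · exact ⟨0, 1, by rw [S, h, h']⟩
  · rcases max_choice ‖g 1 0‖ ‖g 1 1‖ with h' | h'
    · exact ⟨1, 0, by rw [S, h, h']⟩
    · exact ⟨1, 1, by rw [S, h, h']⟩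

theorem reduction {g : Matrix (Fin 2) (Fin 2) ℚ_[p]} (hdet : g.det ≠ 0) : Red g := by
  obtain ⟨i, j, hij⟩ := exists_norm_eq_S g
  have hSpos := S_pos hdet
  have hw : g i j ≠ 0 := by
    intro z; rw [z, norm_zero] at hij; linarith
  have hscale : g = (g i j) • ((g i j)⁻¹ • g) := by
    rw [smul_smul, mul_inv_cancel₀ hw, one_smul]
  have hent : ∀ i' j', ‖((g i j)⁻¹ • g) i' j'‖ ≤ 1 := by
    intro i' j'
    rw [Matrix.smul_apply, smul_eq_mul, norm_mul, norm_inv, hij]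
    calc (S g)⁻¹ * ‖g i' j'‖ ≤ (S g)⁻¹ * S g := by
          apply mul_le_mul_of_nonneg_left (entry_le_S g i' j')
          positivity
      _ = 1 := inv_mul_cancel₀ (ne_of_gt hSpos)
  have hij1 : ‖((g i j)⁻¹ • g) i j‖ = 1 := by
    rw [Matrix.smul_apply, smul_eq_mul, norm_mul, norm_inv]
    exact inv_mul_cancel₀ (by rw [hij]; exact ne_of_gt hSpos)
  have hdeth : ((g i j)⁻¹ • g).det ≠ 0 := by
    rw [Matrix.det_smul, Fintype.card_fin]
    exact mul_ne_zero (pow_ne_zero _ (inv_ne_zero hw)) hdet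
  have hred := red_pos hent hdeth i j hij1
  rw [hscale]
  exact hred.smul hw

/-! ### The core double-coset criterion -/

theorem core {g g' : Matrix (Fin 2) (Fin 2) ℚ_[p]} (hg : g.det ≠ 0) (hg' : g'.det ≠ 0) :
    (∃ c k₁ k₂, c ≠ (0 : ℚ_[p]) ∧ IsGLZp p k₁ ∧ IsGLZp p k₂ ∧ g' = c • (k₁ * g * k₂)) ↔
      ‖g.det‖ * S g' ^ 2 = ‖g'.det‖ * S g ^ 2 := by
  constructor
  · rintro ⟨c, k₁, k₂, hc, h1, h2, rfl⟩
    rw [det_coset h1 h2, S_coset h1 h2]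
    ring
  · intro heq
    obtain ⟨m, c, k₁, k₂, hc, h1, h2, hgr⟩ := reduction hg
    obtain ⟨m', c', k₁', k₂', hc', h1', h2', hgr'⟩ := reduction hg'
    have hdg : ‖g.det‖ = ‖c‖ ^ 2 * (p : ℝ) ^ (-(m : ℤ)) := by
      rw [hgr, det_coset h1 h2, norm_det_D]
    have hdg' : ‖g'.det‖ = ‖c'‖ ^ 2 * (p : ℝ) ^ (-(m' : ℤ)) := by
      rw [hgr', det_coset h1' h2', norm_det_D]
    have hSg : S g = ‖c‖ := by rw [hgr, S_coset h1 h2, S_D, mul_one]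
    have hSg' : S g' = ‖c'‖ := by rw [hgr', S_coset h1' h2', S_D, mul_one]
    have hcp : (0 : ℝ) < ‖c‖ := norm_pos_iff.mpr hc
    have hcp' : (0 : ℝ) < ‖c'‖ := norm_pos_iff.mpr hc'
    rw [hdg, hdg', hSg, hSg'] at heq
    have key : (‖c‖ ^ 2 * ‖c'‖ ^ 2) * (p : ℝ) ^ (-(m : ℤ)) =
        (‖c‖ ^ 2 * ‖c'‖ ^ 2) * (p : ℝ) ^ (-(m' : ℤ)) := by linear_combination heq
    have hp := mul_left_cancel₀ (by positivity : (‖c‖ ^ 2 * ‖c'‖ ^ 2 : ℝ) ≠ 0) key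
    have hmm : m = m' := by
      have := (zpow_right_strictMono₀ (one_lt_pR (p := p))).injective hp
      omega
    subst hmm
    obtain ⟨K₁, hK₁, hk₁K₁, hK₁k₁⟩ := h1.exists_inv
    obtain ⟨K₂, hK₂, hk₂K₂, hK₂k₂⟩ := h2.exists_inv
    have hD : D p m = c⁻¹ • (K₁ * g * K₂) := by
      rw [hgr, smul_mul_helper, smul_smul, inv_mul_cancel₀ hc, one_smul]
      simp only [← Matrix.mul_assoc]
      rw [hK₁k₁, Matrix.one_mul, Matrix.mul_assoc, hk₂K₂, Matrix.mul_one]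
    refine ⟨c' * c⁻¹, k₁' * K₁, K₂ * k₂', mul_ne_zero hc' (inv_ne_zero hc),
      h1'.mul hK₁, hK₂.mul h2', ?_⟩
    rw [hgr', hD, smul_mul_helper, smul_smul]
    congr 1
    simp only [Matrix.mul_assoc]


/-! ### Mmat computations -/


lemma p_zpow_mul_pow (n : ℕ) : (p : ℚ_[p]) ^ (-(n : ℤ)) * (p : ℚ_[p]) ^ (n : ℕ) = 1 := by
  have hp : (p : ℚ_[p]) ≠ 0 := by
    exact_mod_cast (Fact.out : p.Prime).ne_zero
  rw [← zpow_natCast (p : ℚ_[p]) n, ← zpow_add₀ hp]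
  simp

lemma det_Mmat (n : ℕ) (t u : ℤ_[p]) (a b : ℚ_[p]) :
    (Mmat p n t u a b).det = a ^ 2 + a * b * (t : ℚ_[p]) + b ^ 2 * (u : ℚ_[p]) := by
  rw [Mmat, Matrix.det_fin_two_of]
  have h := p_zpow_mul_pow (p := p) n
  linear_combination (b ^ 2 * (u : ℚ_[p])) * h

lemma S_Mmat (n : ℕ) (t u : ℤ_[p]) (a b : ℚ_[p]) :
    S (Mmat p n t u a b) = max ‖a‖ (‖b‖ * (p : ℝ) ^ (n : ℕ)) := by
  have e00 : (Mmat p n t u a b) 0 0 = a + b * (t : ℚ_[p]) := by simp [Mmat]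
  have e01 : (Mmat p n t u a b) 0 1 = b * (p : ℚ_[p]) ^ (-(n : ℤ)) := by simp [Mmat]
  have e10 : (Mmat p n t u a b) 1 0 = -(b * (p : ℚ_[p]) ^ (n : ℕ) * (u : ℚ_[p])) := by
    simp [Mmat]
  have e11 : (Mmat p n t u a b) 1 1 = a := by simp [Mmat]
  have hn01 : ‖b * (p : ℚ_[p]) ^ (-(n : ℤ))‖ = ‖b‖ * (p : ℝ) ^ (n : ℕ) := by
    rw [norm_mul, Padic.norm_p_zpow, neg_neg, zpow_natCast]
  have htle : ‖(t : ℚ_[p])‖ ≤ 1 := by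
    rw [PadicInt.padic_norm_e_of_padicInt]; exact PadicInt.norm_le_one t
  have hule : ‖(u : ℚ_[p])‖ ≤ 1 := by
    rw [PadicInt.padic_norm_e_of_padicInt]; exact PadicInt.norm_le_one u
  have hpn1 : (1 : ℝ) ≤ (p : ℝ) ^ (n : ℕ) := one_le_pow₀ (le_of_lt one_lt_pR)
  have hple : ‖((p : ℚ_[p]) ^ (n : ℕ))‖ ≤ 1 := by
    rw [Padic.norm_p_pow]
    exact zpow_le_one_of_nonpos₀ (le_of_lt one_lt_pR) (by omega)
  refine le_antisymm ?_ ?_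
  · rw [S, e00, e01, e10, e11, hn01]
    refine max_le (max_le ?_ ?_) (max_le ?_ ?_)
    · refine le_trans (Padic.nonarchimedean _ _) (max_le (le_max_left _ _) ?_)
      refine le_trans ?_ (le_max_right ‖a‖ (‖b‖ * (p : ℝ) ^ (n : ℕ)))
      calc ‖b * (t : ℚ_[p])‖ = ‖b‖ * ‖(t : ℚ_[p])‖ := norm_mul _ _
        _ ≤ ‖b‖ * 1 := mul_le_mul_of_nonneg_left htle (norm_nonneg b)
        _ = ‖b‖ := mul_one _
        _ ≤ ‖b‖ * (p : ℝ) ^ (n : ℕ) := le_mul_of_one_le_right (norm_nonneg b) hpn1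
    · exact le_max_right _ _
    · rw [norm_neg, norm_mul, norm_mul]
      refine le_trans ?_ (le_max_right ‖a‖ _)
      calc ‖b‖ * ‖((p:ℚ_[p])^(n:ℕ))‖ * ‖(u : ℚ_[p])‖ ≤ ‖b‖ * 1 * 1 := by
            refine mul_le_mul (mul_le_mul_of_nonneg_left hple (norm_nonneg b)) hule
              (norm_nonneg _) (by positivity)
        _ = ‖b‖ := by ring
        _ ≤ ‖b‖ * (p : ℝ) ^ (n : ℕ) := le_mul_of_one_le_right (norm_nonneg b) hpn1
    · exact le_max_left _ _
  · refine max_le ?_ ?_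
    · rw [← e11]; exact entry_le_S _ 1 1
    · rw [← hn01, ← e01]; exact entry_le_S _ 0 1


/-! ### From norms back to `vT` -/

lemma exists_min_vT {x y : ℚ_[p]} (hxy : ¬(x = 0 ∧ y = 0)) :
    ∃ w : ℚ_[p], w ≠ 0 ∧ ‖w‖ = max ‖x‖ ‖y‖ ∧ min (vT p x) (vT p y) = vT p w := by
  rcases le_total ‖y‖ ‖x‖ with h | h
  · refine ⟨x, ?_, (max_eq_left h).symm, min_eq_left (norm_le_iff_vT_le.mp h)⟩
    intro hx
    apply hxy
    subst hx
    rw [norm_zero] at h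
    exact ⟨rfl, norm_le_zero_iff.mp h⟩
  · refine ⟨y, ?_, (max_eq_right h).symm, min_eq_right (norm_le_iff_vT_le.mp h)⟩
    intro hy
    apply hxy
    subst hy
    rw [norm_zero] at h
    exact ⟨norm_le_zero_iff.mp h, rfl⟩

lemma vT_formula {X Y A B A' B' : ℚ_[p]}
    (hAB : ¬(A = 0 ∧ B = 0)) (hAB' : ¬(A' = 0 ∧ B' = 0)) :
    (vT p X + 2 • min (vT p A') (vT p B') = vT p Y + 2 • min (vT p A) (vT p B)) ↔
      ‖X‖ * (max ‖A'‖ ‖B'‖) ^ 2 = ‖Y‖ * (max ‖A‖ ‖B‖) ^ 2 := by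
  obtain ⟨w, hw0, hwn, hwm⟩ := exists_min_vT hAB
  obtain ⟨w', hw0', hwn', hwm'⟩ := exists_min_vT hAB'
  rw [hwm, hwm', two_nsmul, two_nsmul, ← add_assoc, ← add_assoc, ← vT_mul, ← vT_mul, ← vT_mul,
    ← vT_mul, ← norm_eq_iff_vT_eq, norm_mul, norm_mul, norm_mul, norm_mul, ← hwn, ← hwn']
  constructor <;> intro h <;> linear_combination h

/-! ### Main theorem -/

theorem same_double_coset_iff' (n : ℕ) (t u : ℤ_[p])
    (a b a' b' : ℚ_[p])
    (hab : a ^ 2 + a * b * (t : ℚ_[p]) + b ^ 2 * (u : ℚ_[p]) ≠ 0)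
    (hab' : a' ^ 2 + a' * b' * (t : ℚ_[p]) + b' ^ 2 * (u : ℚ_[p]) ≠ 0) :
    (∃ c k₁ k₂, c ≠ (0 : ℚ_[p]) ∧ IsGLZp p k₁ ∧ IsGLZp p k₂ ∧
        Mmat p n t u a' b' = c • (k₁ * Mmat p n t u a b * k₂)) ↔
      vT p (a ^ 2 + a * b * (t : ℚ_[p]) + b ^ 2 * (u : ℚ_[p])) +
          2 • min (vT p a' + ((n : ℤ) : WithTop ℤ)) (vT p b') =
        vT p (a' ^ 2 + a' * b' * (t : ℚ_[p]) + b' ^ 2 * (u : ℚ_[p])) +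
          2 • min (vT p a + ((n : ℤ) : WithTop ℤ)) (vT p b) := by
  have hg : (Mmat p n t u a b).det ≠ 0 := by rw [det_Mmat]; exact hab
  have hg' : (Mmat p n t u a' b').det ≠ 0 := by rw [det_Mmat]; exact hab'
  have hpne : ((p : ℚ_[p]) ^ (n : ℕ)) ≠ 0 := p_pow_ne_zero n
  have hAB : ¬(a * (p : ℚ_[p]) ^ (n : ℕ) = 0 ∧ b = 0) := by
    rintro ⟨h1, h2⟩
    apply hab
    rw [(mul_eq_zero.mp h1).resolve_right hpne, h2]
    ring
  have hAB' : ¬(a' * (p : ℚ_[p]) ^ (n : ℕ) = 0 ∧ b' = 0) := by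
    rintro ⟨h1, h2⟩
    apply hab'
    rw [(mul_eq_zero.mp h1).resolve_right hpne, h2]
    ring
  have key := vT_formula (p := p)
    (X := a ^ 2 + a * b * (t : ℚ_[p]) + b ^ 2 * (u : ℚ_[p]))
    (Y := a' ^ 2 + a' * b' * (t : ℚ_[p]) + b' ^ 2 * (u : ℚ_[p]))
    (A := a * (p : ℚ_[p]) ^ (n : ℕ)) (B := b)
    (A' := a' * (p : ℚ_[p]) ^ (n : ℕ)) (B' := b') hAB hAB'
  rw [vT_mul_p_pow, vT_mul_p_pow] at key
  refine Iff.trans (core hg hg') ?_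
  rw [det_Mmat, det_Mmat]
  refine Iff.trans ?_ key.symm
  have hq : (0 : ℝ) < (p : ℝ) ^ (-(n : ℤ)) := zpow_pos p_posR _
  have hmax : ∀ x y : ℚ_[p], max ‖x * (p : ℚ_[p]) ^ (n : ℕ)‖ ‖y‖ =
      (p : ℝ) ^ (-(n : ℤ)) * S (Mmat p n t u x y) := by
    intro x y
    rw [S_Mmat, norm_mul, Padic.norm_p_pow, mul_max_of_nonneg _ _ (le_of_lt hq)]
    congr 1
    · ring
    · rw [zpow_neg, zpow_natCast]
      field_simp
      exact (mul_div_cancel_right₀ _ (pow_pos p_posR n).ne').symm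
  rw [hmax, hmax, mul_pow, mul_pow]
  constructor
  · intro h
    linear_combination ((p : ℝ) ^ (-(n : ℤ))) ^ 2 * h
  · intro h
    have hq2 : ((p : ℝ) ^ (-(n : ℤ))) ^ 2 ≠ 0 := by positivity
    apply mul_left_cancel₀ hq2
    linear_combination h



end Aux

/-- Lemma 4.3 (lemdoublecoset): `M(a,b)` and `M(a',b')` lie in the same double coset
`ℚ_p^× GL₂(ℤ_p) g GL₂(ℤ_p)` if and only if
`m(a,b) = v_p(a² + abt + b²u) − 2 min(v_p(a), v_p(b) − n)` equals `m(a',b')`; the latter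
equality of integers is expressed additively in `WithTop ℤ` (after shifting the minima by `n`)
to accommodate `v_p(0) = ⊤`. -/
theorem same_double_coset_iff (p : ℕ) [Fact p.Prime] (n : ℕ) (t u : ℤ_[p])
    (a b a' b' : ℚ_[p])
    (hab : a ^ 2 + a * b * (t : ℚ_[p]) + b ^ 2 * (u : ℚ_[p]) ≠ 0)
    (hab' : a' ^ 2 + a' * b' * (t : ℚ_[p]) + b' ^ 2 * (u : ℚ_[p]) ≠ 0) :
    (∃ c k₁ k₂, c ≠ (0 : ℚ_[p]) ∧ IsGLZp p k₁ ∧ IsGLZp p k₂ ∧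
        Mmat p n t u a' b' = c • (k₁ * Mmat p n t u a b * k₂)) ↔
      vT p (a ^ 2 + a * b * (t : ℚ_[p]) + b ^ 2 * (u : ℚ_[p])) +
          2 • min (vT p a' + ((n : ℤ) : WithTop ℤ)) (vT p b') =
        vT p (a' ^ 2 + a' * b' * (t : ℚ_[p]) + b' ^ 2 * (u : ℚ_[p])) +
          2 • min (vT p a + ((n : ℤ) : WithTop ℤ)) (vT p b) := by
  exact same_double_coset_iff' n t u a b a' b' hab hab'

end TorusDoubleCoset
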